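/- Let F be a forest on N ≥ 1 vertices in which every vertex has bootstrap-percolation threshold 2. Then every contagious set of F, i.e. every set A ⊆ V(F) with ⟨A⟩ = V(F), satisfies |A| > N/2; equivalently m(F, 2) > N/2. -/

import Mathlib

noncomputable section

/-- One step of bootstrap percolation on `G` with thresholds `t`: to the currently
infected set `A` we add every vertex having at least `t v` infected neighbors. -/
def bootStep {V : Type} (G : SimpleGraph V) (t : V → ℕ) (A : Set V) : Set V :=
  A ∪ {v : V | t v ≤ (A ∩ G.neighborSet v).ncard}

/-- `⟨A⟩`: the set of vertices eventually infected from the seed set `A` under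
bootstrap percolation on `G` with thresholds `t`. -/
def bootClosure {V : Type} (G : SimpleGraph V) (t : V → ℕ) (A : Set V) : Set V :=
  ⋃ i : ℕ, (bootStep G t)^[i] A

open SimpleGraph Finset Function

open scoped Classical

variable {V : Type} [Fintype V] {F : SimpleGraph V}

/-- Root of the connected component of `v`. -/
private def rt (F : SimpleGraph V) (v : V) : V := (F.connectedComponentMk v).out

/-- Distance of `v` from the root of its component. -/
private def dep (F : SimpleGraph V) (v : V) : ℕ := F.dist (rt F v) v

private lemma rt_reachable (F : SimpleGraph V) (v : V) : F.Reachable (rt F v) v :=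
  SimpleGraph.ConnectedComponent.eq.mp (Quot.out_eq _)

private lemma rt_eq_of_adj {u v : V} (h : F.Adj u v) : rt F u = rt F v := by
  unfold rt
  rw [SimpleGraph.ConnectedComponent.eq.mpr h.reachable]

private lemma rt_rt (F : SimpleGraph V) (v : V) : rt F (rt F v) = rt F v := by
  unfold rt
  congr 1
  exact Quot.out_eq _

private lemma dep_rt (F : SimpleGraph V) (v : V) : dep F (rt F v) = 0 := by
  unfold dep
  rw [rt_rt, SimpleGraph.dist_self]

private lemma dep_adj_le {u v : V} (h : F.Adj u v) : dep F v ≤ dep F u + 1 := by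
  obtain ⟨p, hp, hl⟩ := (rt_reachable F u).exists_path_of_dist
  have : dep F v = F.dist (rt F u) v := by unfold dep; rw [rt_eq_of_adj h]
  rw [this]
  calc F.dist (rt F u) v ≤ (p.concat h).length := SimpleGraph.dist_le _
    _ = dep F u + 1 := by rw [SimpleGraph.Walk.length_concat, hl]; rfl

/-- Distance bound for a vertex on a walk. -/
private lemma dist_le_of_mem_support {r u x : V} (p : F.Walk r u) (hx : x ∈ p.support) :
    F.dist r x ≤ p.length :=
  (SimpleGraph.dist_le (p.takeUntil x hx)).trans (p.length_takeUntil_le hx)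

/-- Strict distance bound for an interior vertex on a walk. -/
private lemma dist_lt_of_mem_support {r u x : V} (p : F.Walk r u) (hx : x ∈ p.support)
    (hne : x ≠ u) : F.dist r x + 1 ≤ p.length := by
  have hspec := congrArg SimpleGraph.Walk.length (p.take_spec hx)
  rw [SimpleGraph.Walk.length_append] at hspec
  have h1 : (p.dropUntil x hx).length ≠ 0 := fun h0 => hne (SimpleGraph.Walk.eq_of_length_eq_zero h0)
  have h2 := SimpleGraph.dist_le (p.takeUntil x hx)
  omega

private lemma concat_isPath {r u v : V} {p : F.Walk r u} (hp : p.IsPath) (h : F.Adj u v)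
    (hv : v ∉ p.support) : (p.concat h).IsPath := by
  rw [← SimpleGraph.Walk.isPath_reverse_iff, SimpleGraph.Walk.reverse_concat]
  refine hp.reverse.cons ?_
  rwa [SimpleGraph.Walk.support_reverse, List.mem_reverse]

/-- In a forest, adjacent vertices have different depths. -/
private lemma dep_ne_of_adj (hforest : F.IsAcyclic) {u v : V} (h : F.Adj u v) :
    dep F u ≠ dep F v := by
  intro heq
  obtain ⟨p, hp, hpl⟩ := (rt_reachable F u).exists_path_of_dist
  obtain ⟨q, hq, hql⟩ := (rt_reachable F v).exists_path_of_dist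
  have hrt : rt F v = rt F u := (rt_eq_of_adj h).symm
  have hdv : F.dist (rt F u) v = dep F u := by
    rw [heq]; unfold dep; rw [hrt]
  -- v is not on p
  have hvp : v ∉ p.support := by
    intro hv
    have := dist_lt_of_mem_support p hv h.ne'
    rw [hdv, hpl] at this
    unfold dep at this
    omega
  have hpath1 : (p.concat h).IsPath := concat_isPath hp h hvp
  set q' : F.Walk (rt F u) v := q.copy hrt rfl with hq'def
  have hq' : q'.IsPath := by simpa [hq'def] using hq
  have := hforest.path_unique ⟨p.concat h, hpath1⟩ ⟨q', hq'⟩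
  have hlen : (p.concat h).length = q'.length := by
    rw [Subtype.ext_iff] at this; simp at this; rw [this]
  rw [SimpleGraph.Walk.length_concat, hpl] at hlen
  have : q'.length = F.dist (rt F v) v := by simp [hq'def, hql]
  rw [this] at hlen
  unfold dep at heq hdv
  rw [← hrt] at hdv
  omega

/-- In a forest, a vertex cannot have two distinct neighbors of smaller depth. -/
private lemma no_two_parents (hforest : F.IsAcyclic) {w u₁ u₂ : V}
    (h1 : F.Adj u₁ w) (h2 : F.Adj u₂ w) (hne : u₁ ≠ u₂)
    (hd1 : dep F u₁ < dep F w) (hd2 : dep F u₂ < dep F w) : False := by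
  have hrt1 : rt F u₁ = rt F w := rt_eq_of_adj h1
  have hrt2 : rt F u₂ = rt F w := rt_eq_of_adj h2
  have hle1 : dep F w ≤ dep F u₁ + 1 := dep_adj_le h1
  have hle2 : dep F w ≤ dep F u₂ + 1 := dep_adj_le h2
  obtain ⟨p₁, hp₁, hpl₁⟩ := (rt_reachable F u₁).exists_path_of_dist
  obtain ⟨p₂, hp₂, hpl₂⟩ := (rt_reachable F u₂).exists_path_of_dist
  set r := rt F w
  set P₁ : F.Walk r u₁ := p₁.copy hrt1 rfl with hP₁def
  set P₂ : F.Walk r u₂ := p₂.copy hrt2 rfl with hP₂def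
  have hP₁ : P₁.IsPath := by simpa [hP₁def] using hp₁
  have hP₂ : P₂.IsPath := by simpa [hP₂def] using hp₂
  have hPl₁ : P₁.length = dep F u₁ := by simp [hP₁def, hpl₁]; rfl
  have hPl₂ : P₂.length = dep F u₂ := by simp [hP₂def, hpl₂]; rfl
  have hw₁ : w ∉ P₁.support := by
    intro hw
    have := dist_le_of_mem_support P₁ hw
    rw [hPl₁] at this
    have : dep F w ≤ dep F u₁ := this
    omega
  have hw₂ : w ∉ P₂.support := by
    intro hw
    have := dist_le_of_mem_support P₂ hw
    rw [hPl₂] at this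
    have : dep F w ≤ dep F u₂ := this
    omega
  have hq₁ : (P₁.concat h1).IsPath := concat_isPath hP₁ h1 hw₁
  have hq₂ : (P₂.concat h2).IsPath := concat_isPath hP₂ h2 hw₂
  have := hforest.path_unique ⟨P₁.concat h1, hq₁⟩ ⟨P₂.concat h2, hq₂⟩
  rw [Subtype.ext_iff] at this
  simp only at this
  obtain ⟨hv, -⟩ := SimpleGraph.Walk.concat_inj this
  exact hne hv

/-- A forest on `N ≥ 1` vertices has at most `N - 1` edges. -/
private lemma forest_card_edge (hforest : F.IsAcyclic) (hN : 1 ≤ Fintype.card V) :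
    F.edgeFinset.card + 1 ≤ Fintype.card V := by
  have hne : Nonempty V := Fintype.card_pos_iff.mp hN
  obtain ⟨v₀⟩ := hne
  set r₀ := rt F v₀ with hr₀
  have hdr₀ : dep F r₀ = 0 := dep_rt F v₀
  -- choose representatives of edges
  have hex : ∀ e : Sym2 V, ∃ p : V × V, e = s(p.1, p.2) :=
    fun e => Sym2.ind (fun x y => ⟨(x, y), rfl⟩) e
  choose g hg using hex
  set f : Sym2 V → V := fun e =>
    if dep F (g e).1 < dep F (g e).2 then (g e).2 else (g e).1 with hf
  set oth : Sym2 V → V := fun e =>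
    if dep F (g e).1 < dep F (g e).2 then (g e).1 else (g e).2 with hoth
  have hadj : ∀ e ∈ F.edgeFinset, F.Adj (g e).1 (g e).2 := by
    intro e he
    rw [SimpleGraph.mem_edgeFinset] at he
    rw [hg e] at he
    exact he
  have key : ∀ e ∈ F.edgeFinset,
      F.Adj (oth e) (f e) ∧ s(oth e, f e) = e ∧ dep F (oth e) < dep F (f e) := by
    intro e he
    have hadj' := hadj e he
    have hdne := dep_ne_of_adj hforest hadj'
    by_cases hlt : dep F (g e).1 < dep F (g e).2
    · simp only [hf, hoth, if_pos hlt]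
      exact ⟨hadj', (hg e).symm, hlt⟩
    · have hlt' : dep F (g e).2 < dep F (g e).1 := by omega
      simp only [hf, hoth, if_neg hlt]
      exact ⟨hadj'.symm, by rw [Sym2.eq_swap]; exact (hg e).symm, hlt'⟩
  have hmaps : ∀ e ∈ F.edgeFinset, f e ∈ Finset.univ.erase r₀ := by
    intro e he
    obtain ⟨-, -, hd⟩ := key e he
    refine Finset.mem_erase.mpr ⟨?_, Finset.mem_univ _⟩
    intro hfe
    rw [hfe, hdr₀] at hd
    omega
  have hinj : ∀ e₁ ∈ F.edgeFinset, ∀ e₂ ∈ F.edgeFinset, f e₁ = f e₂ → e₁ = e₂ := by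
    intro e₁ he₁ e₂ he₂ hfe
    by_contra hne'
    obtain ⟨ha1, hs1, hd1⟩ := key e₁ he₁
    obtain ⟨ha2, hs2, hd2⟩ := key e₂ he₂
    rw [hfe] at ha1 hs1 hd1
    have hone : oth e₁ ≠ oth e₂ := by
      intro hoo
      rw [hoo] at hs1
      exact hne' (hs1.symm.trans hs2)
    exact no_two_parents hforest ha1 ha2 hone hd1 hd2
  have hcard := Finset.card_le_card_of_injOn f hmaps (fun a ha b hb => hinj a ha b hb)
  rw [Finset.card_erase_of_mem (Finset.mem_univ _), Finset.card_univ] at hcard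
  omega

/-! ### The potential function argument -/

/-- Twice the number of edges inside `S` (ordered count). -/
private def dsum (F : SimpleGraph V) (S : Finset V) : ℕ :=
  ∑ v ∈ S, (S ∩ F.neighborFinset v).card

private lemma inter_neighbor_card (S T : Finset V) (v : V) :
    (T ∩ F.neighborFinset v).card = ∑ u ∈ T, if F.Adj v u then 1 else 0 := by
  rw [← Finset.sum_filter]
  simp only [Finset.sum_const, smul_eq_mul, mul_one]
  congr 1
  ext u
  simp [SimpleGraph.mem_neighborFinset]

private lemma cross_symm (S T : Finset V) :
    ∑ v ∈ S, (T ∩ F.neighborFinset v).card = ∑ u ∈ T, (S ∩ F.neighborFinset u).card := by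
  simp_rw [inter_neighbor_card S T, inter_neighbor_card T S]
  rw [Finset.sum_comm]
  refine Finset.sum_congr rfl fun u _ => Finset.sum_congr rfl fun v _ => ?_
  by_cases hadj : F.Adj v u
  · rw [if_pos hadj, if_pos hadj.symm]
  · rw [if_neg hadj, if_neg fun h => hadj (F.adj_symm h)]

private lemma ncard_eq_card_toFinset (S : Set V) (v : V) :
    (S ∩ F.neighborSet v).ncard = (S.toFinset ∩ F.neighborFinset v).card := by
  rw [← Set.ncard_coe_finset]
  congr 1
  simp [SimpleGraph.neighborFinset_def]

private lemma set_ncard_toFinset (S : Set V) : S.ncard = S.toFinset.card := by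
  rw [← Set.ncard_coe_finset]
  simp

/-- The potential `4|S| - dsum S` does not increase under a bootstrap step. -/
private lemma step_le (F : SimpleGraph V) (S : Set V) :
    4 * (bootStep F (fun _ => 2) S).ncard + dsum F S.toFinset ≤
      4 * S.ncard + dsum F (bootStep F (fun _ => 2) S).toFinset := by
  set T : Set V := bootStep F (fun _ => 2) S with hT
  have hST : S ⊆ T := Set.subset_union_left
  set Sf := S.toFinset
  set Tf := T.toFinset
  set Nw := Tf \ Sf with hNw
  have hsub : Sf ⊆ Tf := Set.toFinset_subset_toFinset.mpr hST
  have hdisj : Disjoint Sf Nw := Finset.disjoint_sdiff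
  have hTf : Tf = Sf ∪ Nw := by rw [hNw, Finset.union_sdiff_of_subset hsub]
  have hcard : Tf.card = Sf.card + Nw.card := by
    rw [hTf, Finset.card_union_of_disjoint hdisj]
  have hnew : ∀ v ∈ Nw, 2 ≤ (Sf ∩ F.neighborFinset v).card := by
    intro v hv
    rw [hNw, Finset.mem_sdiff, Set.mem_toFinset, Set.mem_toFinset] at hv
    obtain ⟨hvT, hvS⟩ := hv
    rw [hT] at hvT
    rcases hvT with h | h
    · exact absurd h hvS
    · rw [Set.mem_setOf_eq] at h
      rwa [ncard_eq_card_toFinset] at h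
  have hsplit : ∀ v, (Tf ∩ F.neighborFinset v).card
      = (Sf ∩ F.neighborFinset v).card + (Nw ∩ F.neighborFinset v).card := by
    intro v
    rw [hTf, Finset.union_inter_distrib_right,
      Finset.card_union_of_disjoint
        (hdisj.mono Finset.inter_subset_left Finset.inter_subset_left)]
  have hd : dsum F Tf = dsum F Sf + (∑ v ∈ Sf, (Nw ∩ F.neighborFinset v).card)
      + ∑ v ∈ Nw, (Tf ∩ F.neighborFinset v).card := by
    unfold dsum
    rw [hTf, Finset.sum_union hdisj]
    have : ∑ v ∈ Sf, ((Sf ∪ Nw) ∩ F.neighborFinset v).card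
        = ∑ v ∈ Sf, (Sf ∩ F.neighborFinset v).card
          + ∑ v ∈ Sf, (Nw ∩ F.neighborFinset v).card := by
      rw [← Finset.sum_add_distrib]
      refine Finset.sum_congr rfl fun v _ => ?_
      rw [← hTf, hsplit]
    rw [this, ← hTf]
  have hcross : ∑ v ∈ Sf, (Nw ∩ F.neighborFinset v).card
      = ∑ v ∈ Nw, (Sf ∩ F.neighborFinset v).card := cross_symm Sf Nw
  have hlow : 2 * Nw.card ≤ ∑ v ∈ Nw, (Sf ∩ F.neighborFinset v).card := by
    calc 2 * Nw.card = ∑ _v ∈ Nw, 2 := by rw [Finset.sum_const, smul_eq_mul, mul_comm]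
      _ ≤ _ := Finset.sum_le_sum hnew
  have hlow2 : ∑ v ∈ Nw, (Sf ∩ F.neighborFinset v).card
      ≤ ∑ v ∈ Nw, (Tf ∩ F.neighborFinset v).card := by
    refine Finset.sum_le_sum fun v _ => ?_
    exact Finset.card_le_card (Finset.inter_subset_inter hsub le_rfl)
  have hSn : S.ncard = Sf.card := set_ncard_toFinset S
  have hTn : T.ncard = Tf.card := set_ncard_toFinset T
  rw [hSn, hTn]
  omega

private lemma iterate_subset_succ (F : SimpleGraph V) (A : Set V) (n : ℕ) :
    (bootStep F (fun _ => 2))^[n] A ⊆ (bootStep F (fun _ => 2))^[n + 1] A := by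
  rw [Function.iterate_succ_apply']
  exact Set.subset_union_left

private lemma iterate_mono (F : SimpleGraph V) (A : Set V) :
    Monotone fun n => (bootStep F (fun _ => 2))^[n] A :=
  monotone_nat_of_le_succ (iterate_subset_succ F A)

private lemma chain_le (F : SimpleGraph V) (A : Set V) (n : ℕ) :
    4 * ((bootStep F (fun _ => 2))^[n] A).ncard + dsum F A.toFinset ≤
      4 * A.ncard + dsum F ((bootStep F (fun _ => 2))^[n] A).toFinset := by
  induction n with
  | zero => simp; exact le_of_eq (congrArg (dsum F) (Finset.ext fun x => Set.mem_toFinset.trans Set.mem_toFinset.symm))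
  | succ n ih =>
    have hstep := step_le F ((bootStep F (fun _ => 2))^[n] A)
    rw [Function.iterate_succ_apply']
    omega

/-- For a forest F on N ≥ 1 vertices under 2-neighbor bootstrap
percolation, every contagious set has size greater than N/2 (so m(F,2) > N/2). -/
theorem forest_contagious_set_large {V : Type} [Fintype V] (F : SimpleGraph V)
    (hforest : F.IsAcyclic) (hN : 1 ≤ Fintype.card V)
    (A : Set V) (hA : bootClosure F (fun _ => 2) A = Set.univ) :
    (Fintype.card V : ℝ) / 2 < (A.ncard : ℝ) := by
  -- find n with the n-th iterate equal to univ
  have hmem : ∀ v : V, ∃ i : ℕ, v ∈ (bootStep F (fun _ => 2))^[i] A := by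
    intro v
    have : v ∈ bootClosure F (fun _ => 2) A := by rw [hA]; trivial
    exact Set.mem_iUnion.mp this
  choose idx hidx using hmem
  set n := Finset.univ.sup idx with hn
  have huniv : (bootStep F (fun _ => 2))^[n] A = Set.univ := by
    apply Set.eq_univ_of_forall
    intro v
    exact iterate_mono F A (Finset.le_sup (Finset.mem_univ v)) (hidx v)
  have hchain := chain_le F A n
  rw [huniv] at hchain
  rw [Set.ncard_univ, Nat.card_eq_fintype_card] at hchain
  have hdeg : ∀ (inst : Fintype ↥(Set.univ : Set V)),
      dsum F (@Set.toFinset V Set.univ inst) = 2 * F.edgeFinset.card := by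
    intro inst
    have htf : @Set.toFinset V Set.univ inst = Finset.univ := by
      ext x; simp [Set.mem_toFinset]
    rw [htf]
    unfold dsum
    rw [← F.sum_degrees_eq_twice_card_edges]
    refine Finset.sum_congr rfl fun v _ => ?_
    rw [Finset.univ_inter]
    rfl
  rw [hdeg _] at hchain
  have hedge := forest_card_edge hforest hN
  have hfinal : Fintype.card V < 2 * A.ncard := by omega
  rw [div_lt_iff₀ (by norm_num : (0:ℝ) < 2)]
  calc (Fintype.card V : ℝ) < (2 * A.ncard : ℕ) := by exact_mod_cast hfinal
    _ = (A.ncard : ℝ) * 2 := by push_cast; ring
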